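/- For fixed k ∈ ℕ and μ with Re μ > -1/2, the linear span of the functions (1-z)^μ (log(1-z))^j for 0 ≤ j ≤ k is a finite-dimensional invariant subspace for the adjoint Cesàro operator C* on H². -/

import Mathlib

open Complex Metric MeasureTheory intervalIntegral

lemma integ1 (μ : ℂ) (hμ : -(1/2 : ℝ) < μ.re) (m : ℕ) :
    IntervalIntegrable (fun s : ℝ => (s : ℂ) ^ μ * (Real.log s : ℂ) ^ m) volume 0 1 := by
  rw [intervalIntegrable_iff_integrableOn_Ioc_of_le zero_le_one]
  set ε : ℝ := (μ.re + 1) / (2 * (m + 1)) with hεdef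
  have hε : 0 < ε := by
    apply div_pos (by linarith) (by positivity)
  have ha : (-1 : ℝ) < μ.re - ε * m := by
    have h1 : ε * m < (μ.re + 1) / 2 := by
      rw [hεdef, div_mul_eq_mul_div, div_lt_div_iff₀ (by positivity) (by norm_num)]
      have : (m : ℝ) < m + 1 := by linarith
      nlinarith [Nat.cast_nonneg (α := ℝ) m]
    linarith
  have hgint : IntegrableOn (fun s : ℝ => (1 / ε ^ m) * s ^ (μ.re - ε * m)) (Set.Ioc 0 1) volume := by
    have := (intervalIntegrable_rpow' (a := 0) (b := 1) ha).const_mul (1 / ε ^ m)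
    rwa [intervalIntegrable_iff_integrableOn_Ioc_of_le zero_le_one] at this
  apply Integrable.mono hgint
  · apply ContinuousOn.aestronglyMeasurable _ measurableSet_Ioc
    apply ContinuousOn.mul
    · intro s hs
      exact (Complex.continuousAt_ofReal_cpow_const s μ (Or.inr (ne_of_gt hs.1))).continuousWithinAt
    · apply ContinuousOn.pow
      exact Complex.continuous_ofReal.comp_continuousOn
        (Real.continuousOn_log.mono (fun s hs => ne_of_gt hs.1))
  · rw [ae_restrict_iff' measurableSet_Ioc]
    filter_upwards with s hs
    have hs0 : 0 < s := hs.1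
    have hs1 : s ≤ 1 := hs.2
    rw [norm_mul, norm_pow,
      Complex.norm_cpow_eq_rpow_re_of_pos hs0, Complex.norm_real, Real.norm_eq_abs]
    have hlog : |Real.log s| ≤ s ^ (-ε) / ε := by
      rw [abs_of_nonpos (Real.log_nonpos hs0.le hs1), ← Real.log_inv]
      calc Real.log s⁻¹ ≤ (s⁻¹) ^ ε / ε := Real.log_le_rpow_div (by positivity) hε
        _ = s ^ (-ε) / ε := by rw [Real.inv_rpow hs0.le, ← Real.rpow_neg hs0.le]
    calc s ^ μ.re * |Real.log s| ^ m ≤ s ^ μ.re * (s ^ (-ε) / ε) ^ m := by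
          gcongr
      _ = ‖(1 / ε ^ m) * s ^ (μ.re - ε * m)‖ := by
          rw [div_pow, ← Real.rpow_natCast (s ^ (-ε)) m, ← Real.rpow_mul hs0.le]
          rw [Real.norm_eq_abs, _root_.abs_of_nonneg (by positivity)]
          rw [show μ.re - ε * ↑m = μ.re + (-ε * ↑m) by ring, Real.rpow_add hs0]
          ring

lemma integ2 (μ : ℂ) (hμ : -(1/2 : ℝ) < μ.re) (m : ℕ) :
    IntervalIntegrable (fun t : ℝ => ((1 - t : ℝ) : ℂ) ^ μ * (Real.log (1 - t) : ℂ) ^ m)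
      volume 0 1 := by
  have := ((integ1 μ hμ m).comp_sub_left 1).symm
  norm_num at this
  simpa only [Complex.ofReal_sub, Complex.ofReal_one] using this

lemma cpow_ofReal_mul {r : ℝ} (hr : 0 < r) {x : ℂ} (hx : x ≠ 0) (μ : ℂ) :
    ((r : ℂ) * x) ^ μ = (r : ℂ) ^ μ * x ^ μ := by
  rw [cpow_def_of_ne_zero (mul_ne_zero (by exact_mod_cast hr.ne') hx),
    cpow_def_of_ne_zero (by exact_mod_cast hr.ne' : (r:ℂ) ≠ 0), cpow_def_of_ne_zero hx,
    Complex.log_ofReal_mul hr hx, Complex.ofReal_log hr.le, add_mul, Complex.exp_add]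

lemma expand (μ : ℂ) (j : ℕ) {z : ℂ} (hz : 1 - z ≠ 0) {t : ℝ} (ht : t < 1) :
    (1 - (z + (t : ℂ) * (1 - z))) ^ μ * (Complex.log (1 - (z + (t : ℂ) * (1 - z)))) ^ j
    = ∑ i ∈ Finset.range (j + 1),
        ((j.choose i : ℂ) * (((1 - t : ℝ) : ℂ) ^ μ * (Real.log (1 - t) : ℂ) ^ (j - i)))
        * ((1 - z) ^ μ * (Complex.log (1 - z)) ^ i) := by
  have hr : (0 : ℝ) < 1 - t := by linarith
  have h1 : (1 : ℂ) - (z + (t : ℂ) * (1 - z)) = ((1 - t : ℝ) : ℂ) * (1 - z) := by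
    push_cast; ring
  rw [h1, cpow_ofReal_mul hr hz μ, Complex.log_ofReal_mul hr hz,
    add_comm ((Real.log (1 - t) : ℂ)) (Complex.log (1 - z)), add_pow, Finset.mul_sum]
  exact Finset.sum_congr rfl fun i _ => by ring

noncomputable def Eb (μ : ℂ) (j : ℕ) : ℂ → ℂ :=
  fun z : ℂ => (1 - z) ^ μ * (Complex.log (1 - z)) ^ j

/-- The adjoint Cesàro operator, via
`(C*f)(z) = (1/(1-z)) ∫_z^1 f(ξ) dξ = ∫₀¹ f(z + t(1-z)) dt`. -/
noncomputable def cesaroStar (f : ℂ → ℂ) (z : ℂ) : ℂ :=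
  ∫ t in (0:ℝ)..1, f (z + (t : ℂ) * (1 - z))

lemma key_ae (μ : ℂ) (j : ℕ) {z : ℂ} (hz1 : (1 : ℂ) - z ≠ 0) :
    ∀ᵐ t : ℝ ∂volume, t ∈ Set.uIoc (0:ℝ) 1 →
      Eb μ j (z + (t : ℂ) * (1 - z)) =
      ∑ i ∈ Finset.range (j + 1),
        ((j.choose i : ℂ) * (((1 - t : ℝ) : ℂ) ^ μ * (Real.log (1 - t) : ℂ) ^ (j - i)))
        * Eb μ i z := by
  have hne : ∀ᵐ t : ℝ ∂volume, t ≠ 1 :=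
    (MeasureTheory.compl_mem_ae_iff.mpr Real.volume_singleton : _)
  filter_upwards [hne] with t ht htm
  rw [Set.uIoc_of_le zero_le_one] at htm
  exact expand μ j hz1 (lt_of_le_of_ne htm.2 ht)

lemma hint_term (μ : ℂ) (hμ : -(1/2 : ℝ) < μ.re) (j : ℕ) (z : ℂ) (i : ℕ) :
    IntervalIntegrable (fun t : ℝ =>
      ((j.choose i : ℂ) * (((1 - t : ℝ) : ℂ) ^ μ * (Real.log (1 - t) : ℂ) ^ (j - i)))
      * Eb μ i z) volume 0 1 :=
  ((integ2 μ hμ (j - i)).const_mul _).mul_const _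

lemma integ3 (μ : ℂ) (hμ : -(1/2 : ℝ) < μ.re) (j : ℕ) {z : ℂ} (hz1 : (1 : ℂ) - z ≠ 0) :
    IntervalIntegrable (fun t : ℝ => Eb μ j (z + (t : ℂ) * (1 - z))) volume 0 1 := by
  rw [intervalIntegrable_iff]
  refine MeasureTheory.Integrable.congr (f := fun t : ℝ => ∑ i ∈ Finset.range (j + 1),
      ((j.choose i : ℂ) * (((1 - t : ℝ) : ℂ) ^ μ * (Real.log (1 - t) : ℂ) ^ (j - i)))
      * Eb μ i z) ?_ ?_
  · have := IntervalIntegrable.sum (μ := volume) (a := (0:ℝ)) (b := 1)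
      (Finset.range (j + 1)) (fun i _ => hint_term μ hμ j z i)
    rw [intervalIntegrable_iff] at this
    have h2 : (∑ i ∈ Finset.range (j + 1), fun t : ℝ =>
        ((j.choose i : ℂ) * (((1 - t : ℝ) : ℂ) ^ μ * (Real.log (1 - t) : ℂ) ^ (j - i)))
        * Eb μ i z) = fun t : ℝ => ∑ i ∈ Finset.range (j + 1),
        ((j.choose i : ℂ) * (((1 - t : ℝ) : ℂ) ^ μ * (Real.log (1 - t) : ℂ) ^ (j - i)))
        * Eb μ i z := by
      ext t
      simp [Finset.sum_apply]
    rwa [h2] at this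
  · apply (MeasureTheory.ae_restrict_iff' measurableSet_uIoc).mpr
    filter_upwards [key_ae μ j hz1] with t ht htm
    exact (ht htm).symm

lemma cesaro_Eb (μ : ℂ) (hμ : -(1/2 : ℝ) < μ.re) (j : ℕ) {z : ℂ} (hz1 : (1 : ℂ) - z ≠ 0) :
    cesaroStar (Eb μ j) z = ∑ i ∈ Finset.range (j + 1),
      ((j.choose i : ℂ) *
        (∫ t in (0:ℝ)..1, ((1 - t : ℝ) : ℂ) ^ μ * (Real.log (1 - t) : ℂ) ^ (j - i)))
      * Eb μ i z := by
  rw [cesaroStar, intervalIntegral.integral_congr_ae (key_ae μ j hz1),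
    intervalIntegral.integral_finset_sum (fun i _ => hint_term μ hμ j z i)]
  refine Finset.sum_congr rfl fun i hi => ?_
  rw [intervalIntegral.integral_mul_const, intervalIntegral.integral_const_mul]

/-- For fixed `k` and `Re μ > -1/2`, the (finite-dimensional) linear span of the functions
`(1-z)^μ (log(1-z))^j`, `0 ≤ j ≤ k`, is invariant under the adjoint Cesàro operator. -/
theorem cesaroStar_invariant_log_span (μ : ℂ) (hμ : -(1/2 : ℝ) < μ.re) (k : ℕ) :
    ∀ f ∈ Submodule.span ℂ
        ((fun j : ℕ => fun z : ℂ => (1 - z) ^ μ * (Complex.log (1 - z)) ^ j) '' Set.Iic k),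
      ∃ g ∈ Submodule.span ℂ
        ((fun j : ℕ => fun z : ℂ => (1 - z) ^ μ * (Complex.log (1 - z)) ^ j) '' Set.Iic k),
        ∀ z ∈ ball (0 : ℂ) 1, cesaroStar f z = g z := by
  have hFe : (fun j : ℕ => fun z : ℂ => (1 - z) ^ μ * (Complex.log (1 - z)) ^ j) = Eb μ := rfl
  rw [hFe]
  suffices h : ∀ f ∈ Submodule.span ℂ (Eb μ '' Set.Iic k),
      (∀ z ∈ ball (0 : ℂ) 1,
        IntervalIntegrable (fun t : ℝ => f (z + (t : ℂ) * (1 - z))) volume 0 1) ∧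
      ∃ g ∈ Submodule.span ℂ (Eb μ '' Set.Iic k), ∀ z ∈ ball (0 : ℂ) 1, cesaroStar f z = g z by
    exact fun f hf => (h f hf).2
  intro f hf
  induction hf using Submodule.span_induction with
  | mem x hx =>
    obtain ⟨j, hjk, rfl⟩ := hx
    have hz1 : ∀ z : ℂ, z ∈ ball (0:ℂ) 1 → (1 : ℂ) - z ≠ 0 := by
      intro z hz
      rw [sub_ne_zero]
      intro h
      rw [mem_ball_zero_iff, ← h] at hz
      simp at hz
    refine ⟨fun z hz => integ3 μ hμ j (hz1 z hz), ?_⟩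
    refine ⟨∑ i ∈ Finset.range (j + 1),
      ((j.choose i : ℂ) *
        (∫ t in (0:ℝ)..1, ((1 - t : ℝ) : ℂ) ^ μ * (Real.log (1 - t) : ℂ) ^ (j - i))) • Eb μ i,
      ?_, ?_⟩
    · refine Submodule.sum_mem _ fun i hi => Submodule.smul_mem _ _ (Submodule.subset_span ?_)
      exact ⟨i, le_trans (Nat.lt_succ_iff.mp (Finset.mem_range.mp hi)) hjk, rfl⟩
    · intro z hz
      rw [cesaro_Eb μ hμ j (hz1 z hz), Finset.sum_apply]
      exact Finset.sum_congr rfl fun i hi => by rw [Pi.smul_apply, smul_eq_mul]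
  | zero =>
    refine ⟨fun z hz => by simpa using intervalIntegrable_const (c := (0:ℂ)), 0,
      Submodule.zero_mem _, fun z hz => ?_⟩
    simp [cesaroStar]
  | add x y hx hy ihx ihy =>
    obtain ⟨hix, gx, hgx, hex⟩ := ihx
    obtain ⟨hiy, gy, hgy, hey⟩ := ihy
    refine ⟨fun z hz => by simpa using (hix z hz).add (hiy z hz),
      gx + gy, Submodule.add_mem _ hgx hgy, fun z hz => ?_⟩
    have hxy : cesaroStar (x + y) z = cesaroStar x z + cesaroStar y z := by
      rw [cesaroStar, cesaroStar, cesaroStar,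
        ← intervalIntegral.integral_add (hix z hz) (hiy z hz)]
      simp
    rw [hxy, hex z hz, hey z hz]
    simp
  | smul a x hx ih =>
    obtain ⟨hix, gx, hgx, hex⟩ := ih
    refine ⟨fun z hz => by simpa using (hix z hz).const_mul a,
      a • gx, Submodule.smul_mem _ _ hgx, fun z hz => ?_⟩
    have hax : cesaroStar (a • x) z = a * cesaroStar x z := by
      rw [cesaroStar, cesaroStar, ← intervalIntegral.integral_const_mul]
      simp
    rw [hax, hex z hz]
    simp
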